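/- Let A = C^∞(M₃) where M₃ = H₃(ℤ)\H₃(ℝ) is the Heisenberg nilmanifold, realized as {f ∈ C^∞(ℝ×𝕋²) : f(x+1, y, t+y) = f(x,y,t)}. Define U(x,y,t) = e^{2πiy} and V(x,y,t) = e^{2πix}, and the twisted product with p = (2π)^{-1/2}∂_x, q = -i(2π)^{-1/2}(∂_y + x∂_t): a∗_θ b = Σ_{k≥0}(−θ)^k/k!(p^k a)(q^k b). Then U ∗_θ V = e^{2πiθ} V ∗_θ U as formal power series in θ. -/

import Mathlib

/-- Functions on `ℝ×𝕋²` (periodicity imposed separately). -/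
abbrev Fn3 : Type := ℝ × ℝ × ℝ → ℂ

/-- The vector field `p = (2π)^{-1/2} ∂_x` on the Heisenberg manifold. -/
noncomputable def pOp (f : Fn3) : Fn3 := fun v =>
  ((Real.sqrt (2 * Real.pi) : ℝ) : ℂ)⁻¹ * deriv (fun s => f (s, v.2.1, v.2.2)) v.1

/-- The vector field `q = -i(2π)^{-1/2}(∂_y + x ∂_t)` on the Heisenberg manifold. -/
noncomputable def qOp (f : Fn3) : Fn3 := fun v =>
  (-Complex.I) * ((Real.sqrt (2 * Real.pi) : ℝ) : ℂ)⁻¹ *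
    (deriv (fun s => f (v.1, s, v.2.2)) v.2.1 +
      (v.1 : ℂ) * deriv (fun s => f (v.1, v.2.1, s)) v.2.2)

/-- The twisted product `a ∗_θ b = Σ_k ((−θ)^k/k!)(p^k a)(q^k b)`, as a formal power
series (in `ℏ`) of functions. -/
noncomputable def star6 (θ : PowerSeries ℂ) (f g : Fn3) : PowerSeries Fn3 :=
  PowerSeries.mk fun N => ∑ k ∈ Finset.range (N + 1),
    ((k.factorial : ℂ)⁻¹ * PowerSeries.coeff N ((-θ) ^ k)) • (pOp^[k] f * qOp^[k] g)

/-- `exp(u)` for a scalar power series `u` with zero constant term. -/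
noncomputable def cexpSeries (u : PowerSeries ℂ) : PowerSeries ℂ :=
  PowerSeries.mk fun N => ∑ k ∈ Finset.range (N + 1),
    (k.factorial : ℂ)⁻¹ * PowerSeries.coeff N (u ^ k)

/-- The generator `U(x,y,t) = e^{2πiy}`. -/
noncomputable def Ugen : Fn3 := fun v => Complex.exp (2 * Real.pi * Complex.I * v.2.1)

/-- The generator `V(x,y,t) = e^{2πix}`. -/
noncomputable def Vgen : Fn3 := fun v => Complex.exp (2 * Real.pi * Complex.I * v.1)

open PowerSeries

section Aux

/-- derivative of `a·e^{cs}` in a real variable. -/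
lemma deriv_aexp (a c : ℂ) (s : ℝ) :
    deriv (fun s : ℝ => a * Complex.exp (c * s)) s = a * (c * Complex.exp (c * s)) := by
  have h : HasDerivAt (fun s : ℝ => a * Complex.exp (c * (s:ℂ)))
      (a * (Complex.exp (c * (s:ℂ)) * c)) s := by
    have h0 : HasDerivAt (fun s : ℝ => c * (s:ℂ)) c s := by
      simpa using (Complex.ofRealCLM.hasDerivAt (x := s)).const_mul c
    simpa using (h0.cexp).const_mul a
  rw [h.deriv]; ring

lemma coeff_pow_zero {u : PowerSeries ℂ} (hu : constantCoeff u = 0) {N k : ℕ}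
    (h : N < k) : coeff N (u ^ k) = 0 := by
  have : (X : PowerSeries ℂ) ^ k ∣ u ^ k := pow_dvd_pow_of_dvd (X_dvd_iff.mpr hu) k
  exact (X_pow_dvd_iff.mp this) N h

lemma alt_sum (m : ℕ) :
    ∑ p ∈ Finset.HasAntidiagonal.antidiagonal m,
      ((p.1.factorial : ℂ)⁻¹ * ((-1) ^ p.2 * (p.2.factorial : ℂ)⁻¹)) =
    if m = 0 then 1 else 0 := by
  rw [Finset.Nat.sum_antidiagonal_eq_sum_range_succ_mk]
  have key : ∀ k ∈ Finset.range (m+1),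
      ((k.factorial : ℂ)⁻¹ * ((-1) ^ (m-k) * ((m-k).factorial : ℂ)⁻¹)) =
      ((m.factorial : ℂ))⁻¹ * ((-1)^m * ((-1)^k * (m.choose k : ℂ))) := by
    intro k hk
    rw [Finset.mem_range] at hk
    have hkm : k ≤ m := Nat.lt_succ_iff.mp hk
    have hfac : (m.choose k : ℂ) * (k.factorial : ℂ) * ((m-k).factorial : ℂ)
        = (m.factorial : ℂ) := by
      exact_mod_cast congrArg (Nat.cast : ℕ → ℂ)
        (Nat.choose_mul_factorial_mul_factorial hkm)
    have hsgn : ((-1 : ℂ)) ^ (m - k) = (-1)^m * (-1)^k := by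
      have h1 : ((-1 : ℂ))^(m-k) * (-1)^k = (-1)^m := by
        rw [← pow_add]; congr 1; omega
      have h2 : ((-1:ℂ))^k * ((-1:ℂ))^k = 1 := by
        rw [← pow_add, ← two_mul, pow_mul]; norm_num
      calc ((-1:ℂ))^(m-k) = ((-1:ℂ))^(m-k) * (((-1:ℂ))^k * ((-1:ℂ))^k) := by rw [h2, mul_one]
        _ = (-1)^m * (-1)^k := by rw [← mul_assoc, h1]
    rw [hsgn]
    have hk0 : (k.factorial : ℂ) ≠ 0 := Nat.cast_ne_zero.mpr k.factorial_ne_zero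
    have hmk0 : ((m-k).factorial : ℂ) ≠ 0 := Nat.cast_ne_zero.mpr (m-k).factorial_ne_zero
    have hm0 : (m.factorial : ℂ) ≠ 0 := Nat.cast_ne_zero.mpr m.factorial_ne_zero
    field_simp
    linear_combination (-1:ℂ) * hfac
  rw [Finset.sum_congr rfl key, ← Finset.mul_sum, ← Finset.mul_sum]
  have hC : ∑ k ∈ Finset.range (m+1), ((-1:ℂ))^k * (m.choose k : ℂ)
      = if m = 0 then 1 else 0 := by
    exact_mod_cast Int.alternating_sum_range_choose (n := m)
  rw [hC]
  split
  · next h => subst h; norm_num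
  · ring

lemma double_sum_aux (u : PowerSeries ℂ) (hu : constantCoeff u = 0) (N : ℕ) :
    ∑ k ∈ Finset.range (N+1), ∑ l ∈ Finset.range (N+1),
      ((k.factorial : ℂ)⁻¹ * ((-1:ℂ)^l * (l.factorial : ℂ)⁻¹)) * coeff N (u^(k+l))
    = if N = 0 then 1 else 0 := by
  rw [← Finset.sum_product']
  set f : ℕ × ℕ → ℂ := fun p =>
    ((p.1.factorial : ℂ)⁻¹ * ((-1:ℂ)^p.2 * (p.2.factorial : ℂ)⁻¹)) * coeff N (u^(p.1+p.2))
    with hf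
  have hsub : ((Finset.range (N+1)).biUnion fun m => Finset.HasAntidiagonal.antidiagonal m) ⊆
      (Finset.range (N+1)) ×ˢ (Finset.range (N+1)) := by
    intro p hp
    simp only [Finset.mem_biUnion, Finset.mem_range, Finset.HasAntidiagonal.mem_antidiagonal] at hp
    obtain ⟨m, hm, hpm⟩ := hp
    simp only [Finset.mem_product, Finset.mem_range]
    omega
  have hv : ∀ p ∈ (Finset.range (N+1)) ×ˢ (Finset.range (N+1)),
      p ∉ ((Finset.range (N+1)).biUnion fun m => Finset.HasAntidiagonal.antidiagonal m) → f p = 0 := by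
    intro p _ hnp
    have hgt : N < p.1 + p.2 := by
      by_contra h
      push_neg at h
      exact hnp (Finset.mem_biUnion.mpr ⟨p.1 + p.2, Finset.mem_range.mpr (by omega),
        Finset.HasAntidiagonal.mem_antidiagonal.mpr rfl⟩)
    rw [hf]
    simp only
    rw [coeff_pow_zero hu hgt, mul_zero]
  have hdisj : (↑(Finset.range (N+1)) : Set ℕ).PairwiseDisjoint
      (fun m => (Finset.HasAntidiagonal.antidiagonal m : Finset (ℕ × ℕ))) := by
    intro a _ b _ hab
    refine Finset.disjoint_left.mpr ?_
    intro p hpa hpb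
    rw [Finset.HasAntidiagonal.mem_antidiagonal] at hpa hpb
    exact hab (hpa ▸ hpb)
  calc ∑ p ∈ (Finset.range (N+1)) ×ˢ (Finset.range (N+1)), f p
      = ∑ p ∈ ((Finset.range (N+1)).biUnion fun m => Finset.HasAntidiagonal.antidiagonal m), f p :=
        (Finset.sum_subset hsub hv).symm
    _ = ∑ m ∈ Finset.range (N+1), ∑ p ∈ Finset.HasAntidiagonal.antidiagonal m, f p :=
        Finset.sum_biUnion hdisj
    _ = ∑ m ∈ Finset.range (N+1), (if m = 0 then 1 else 0) * coeff N (u^m) := by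
        apply Finset.sum_congr rfl
        intro m _
        have hfp : ∀ p ∈ Finset.HasAntidiagonal.antidiagonal m, f p =
            ((p.1.factorial : ℂ)⁻¹ * ((-1:ℂ)^p.2 * (p.2.factorial : ℂ)⁻¹)) * coeff N (u^m) := by
          intro p hp
          rw [hf]
          simp only
          rw [Finset.HasAntidiagonal.mem_antidiagonal.mp hp]
        rw [Finset.sum_congr rfl hfp, ← Finset.sum_mul, alt_sum m]
    _ = if N = 0 then 1 else 0 := by
        rw [Finset.sum_eq_single 0]
        · simp [coeff_one]
        · intro m _ hm
          simp [hm]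
        · intro h
          exact absurd (Finset.mem_range.mpr (by omega)) h

lemma cexp_mul_cexp_neg {u : PowerSeries ℂ} (hu : constantCoeff u = 0) :
    cexpSeries u * cexpSeries (-u) = 1 := by
  ext N
  rw [PowerSeries.coeff_mul]
  have hA : ∀ i ≤ N, (coeff i) (cexpSeries u)
      = ∑ k ∈ Finset.range (N + 1), (k.factorial : ℂ)⁻¹ * coeff i (u ^ k) := by
    intro i hi
    rw [cexpSeries, coeff_mk]
    apply Finset.sum_subset
    · exact Finset.range_subset_range.mpr (by omega)
    · intro k _ hk
      rw [Finset.mem_range, not_lt] at hk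
      rw [coeff_pow_zero hu (by omega), mul_zero]
  have hB : ∀ i ≤ N, (coeff i) (cexpSeries (-u))
      = ∑ k ∈ Finset.range (N + 1), (k.factorial : ℂ)⁻¹ * coeff i ((-u) ^ k) := by
    intro i hi
    rw [cexpSeries, coeff_mk]
    apply Finset.sum_subset
    · exact Finset.range_subset_range.mpr (by omega)
    · intro k _ hk
      rw [Finset.mem_range, not_lt] at hk
      have hnu : constantCoeff (-u) = 0 := by rw [map_neg, hu, neg_zero]
      rw [coeff_pow_zero hnu (by omega), mul_zero]
  have hneg : ∀ (l j : ℕ), coeff j ((-u)^l) = (-1:ℂ)^l * coeff j (u^l) := by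
    intro l j
    rw [← neg_one_smul ℂ u, smul_pow, map_smul, smul_eq_mul]
  calc ∑ p ∈ Finset.HasAntidiagonal.antidiagonal N, coeff p.1 (cexpSeries u) * coeff p.2 (cexpSeries (-u))
      = ∑ p ∈ Finset.HasAntidiagonal.antidiagonal N, ∑ k ∈ Finset.range (N+1), ∑ l ∈ Finset.range (N+1),
          ((k.factorial:ℂ)⁻¹ * ((-1:ℂ)^l * (l.factorial:ℂ)⁻¹))
            * (coeff p.1 (u^k) * coeff p.2 (u^l)) := by
        apply Finset.sum_congr rfl
        intro p hp
        have hp' := Finset.HasAntidiagonal.mem_antidiagonal.mp hp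
        rw [hA p.1 (by omega), hB p.2 (by omega), Finset.sum_mul_sum]
        apply Finset.sum_congr rfl; intro k _
        apply Finset.sum_congr rfl; intro l _
        rw [hneg]
        ring
    _ = ∑ k ∈ Finset.range (N+1), ∑ l ∈ Finset.range (N+1),
          ((k.factorial:ℂ)⁻¹ * ((-1:ℂ)^l * (l.factorial:ℂ)⁻¹)) * coeff N (u^(k+l)) := by
        rw [Finset.sum_comm]
        apply Finset.sum_congr rfl; intro k _
        rw [Finset.sum_comm]
        apply Finset.sum_congr rfl; intro l _
        rw [← Finset.mul_sum, ← PowerSeries.coeff_mul, ← pow_add]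
    _ = if N = 0 then 1 else 0 := double_sum_aux u hu N
    _ = coeff N 1 := by rw [coeff_one]

-- Analytic computations
lemma pOp_Ugen : pOp Ugen = 0 := by
  funext v
  simp only [pOp, Ugen]
  rw [deriv_const]
  simp

lemma pOp_zero : pOp (0 : Fn3) = 0 := by
  funext v
  simp only [pOp, Pi.zero_apply]
  rw [deriv_const]
  simp

lemma pOp_iter_Ugen {k : ℕ} (hk : 1 ≤ k) : pOp^[k] Ugen = 0 := by
  obtain ⟨j, rfl⟩ : ∃ j, k = j + 1 := ⟨k - 1, by omega⟩
  rw [Function.iterate_succ_apply, pOp_Ugen, Function.iterate_fixed pOp_zero]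

lemma qOp_Vgen : qOp Vgen = 0 := by
  funext v
  simp only [qOp, Vgen]
  rw [deriv_const, deriv_const]
  simp

noncomputable def cP : ℂ := (((Real.sqrt (2 * Real.pi) : ℝ) : ℂ))⁻¹ * (2 * Real.pi * Complex.I)
noncomputable def cQ : ℂ := (-Complex.I) * (((Real.sqrt (2 * Real.pi) : ℝ) : ℂ))⁻¹ * (2 * Real.pi * Complex.I)

lemma pOp_iter_Vgen (k : ℕ) :
    pOp^[k] Vgen = fun v => cP ^ k * Complex.exp (2 * Real.pi * Complex.I * v.1) := by
  induction k with
  | zero => funext v; simp [Vgen]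
  | succ j ih =>
    rw [Function.iterate_succ_apply', ih]
    funext v
    simp only [pOp]
    rw [deriv_aexp (cP ^ j) (2 * Real.pi * Complex.I) v.1]
    rw [pow_succ, cP]
    ring

lemma qOp_iter_Ugen (k : ℕ) :
    qOp^[k] Ugen = fun v => cQ ^ k * Complex.exp (2 * Real.pi * Complex.I * v.2.1) := by
  induction k with
  | zero => funext v; simp [Ugen]
  | succ j ih =>
    rw [Function.iterate_succ_apply', ih]
    funext v
    simp only [qOp]
    rw [deriv_aexp (cQ ^ j) (2 * Real.pi * Complex.I) v.2.1, deriv_const]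
    rw [pow_succ, cQ]
    ring

lemma cP_mul_cQ : cP * cQ = 2 * Real.pi * Complex.I := by
  have h2 : ((Real.sqrt (2 * Real.pi) : ℝ) : ℂ) * ((Real.sqrt (2 * Real.pi) : ℝ) : ℂ)
      = ((2 * Real.pi : ℝ) : ℂ) := by
    rw [← Complex.ofReal_mul]
    congr 1
    exact Real.mul_self_sqrt (by positivity)
  have hne : ((Real.sqrt (2 * Real.pi) : ℝ) : ℂ) ≠ 0 := by
    simp only [ne_eq, Complex.ofReal_eq_zero]
    positivity
  have key : cP * cQ = (-Complex.I) * (((2 * Real.pi : ℝ) : ℂ))⁻¹ *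
      (2 * Real.pi * Complex.I)^2 := by
    rw [cP, cQ, ← h2, mul_inv]; ring
  have hsq : (2 * (Real.pi:ℂ) * Complex.I)^2 = -(2*(Real.pi:ℂ))^2 := by
    rw [mul_pow, Complex.I_sq]; ring
  have hpi : (Real.pi : ℂ) ≠ 0 := by
    simp only [ne_eq, Complex.ofReal_eq_zero]; exact Real.pi_ne_zero
  rw [key]
  push_cast
  rw [hsq]
  field_simp

end Aux

/-- `U ∗_θ V = e^{2πiθ} V ∗_θ U` as formal power series in `θ ∈ ℏℂ[[ℏ]]`. -/
theorem stmt6 (θ : PowerSeries ℂ) (hθ : PowerSeries.constantCoeff θ = 0) :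
    star6 θ Ugen Vgen =
      PowerSeries.map (algebraMap ℂ Fn3)
        (cexpSeries ((2 * Real.pi * Complex.I : ℂ) • θ)) * star6 θ Vgen Ugen := by
  set a : ℂ := (2 * Real.pi * Complex.I : ℂ) with ha
  have h1 : star6 θ Ugen Vgen = PowerSeries.C (Ugen * Vgen) := by
    ext N
    rw [star6, coeff_mk]
    rw [Finset.sum_eq_single 0]
    · rw [coeff_C]
      simp only [Function.iterate_zero_apply, pow_zero, Nat.factorial_zero, Nat.cast_one,
        inv_one, one_mul, PowerSeries.coeff_one]
      split <;> simp
    · intro k _ hk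
      rw [pOp_iter_Ugen (by omega)]
      simp
    · intro h
      exact absurd (Finset.mem_range.mpr (by omega)) h
  have h2 : star6 θ Vgen Ugen =
      PowerSeries.map (algebraMap ℂ Fn3) (cexpSeries ((-a) • θ)) *
        PowerSeries.C (Vgen * Ugen) := by
    ext N
    rw [star6, coeff_mk, PowerSeries.coeff_mul_C, PowerSeries.coeff_map, cexpSeries, coeff_mk]
    have hterm : ∀ k ∈ Finset.range (N+1),
        ((k.factorial : ℂ)⁻¹ * PowerSeries.coeff N ((-θ) ^ k)) • (pOp^[k] Vgen * qOp^[k] Ugen)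
        = ((k.factorial : ℂ)⁻¹ * PowerSeries.coeff N (((-a) • θ) ^ k)) • (Vgen * Ugen) := by
      intro k _
      have hpk : cP ^ k * cQ ^ k = a ^ k := by
        rw [← mul_pow, cP_mul_cQ, ha]
      have hfg : pOp^[k] Vgen * qOp^[k] Ugen = a ^ k • (Vgen * Ugen) := by
        rw [pOp_iter_Vgen, qOp_iter_Ugen]
        funext v
        simp only [Pi.mul_apply, Pi.smul_apply, smul_eq_mul, Vgen, Ugen]
        rw [← hpk]
        ring
      rw [hfg, smul_smul]
      congr 1
      have hc : ((-a) • θ) ^ k = ((-a) ^ k) • ((θ : PowerSeries ℂ) ^ k) := smul_pow _ _ _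
      have hc2 : ((-θ) : PowerSeries ℂ) ^ k = ((-1 : ℂ) ^ k) • (θ ^ k) := by
        rw [← neg_one_smul ℂ θ, smul_pow]
      rw [hc, hc2, map_smul, map_smul, smul_eq_mul, smul_eq_mul, neg_pow a k]
      ring
    rw [Finset.sum_congr rfl hterm, ← Finset.sum_smul]
    rw [Algebra.smul_def]
  have hconst : constantCoeff (a • θ) = 0 := by
    rw [← coeff_zero_eq_constantCoeff_apply, map_smul, coeff_zero_eq_constantCoeff_apply,
      hθ, smul_zero]
  have h3 : cexpSeries (a • θ) * cexpSeries ((-a) • θ) = 1 := by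
    have : (-a) • θ = -(a • θ) := by rw [neg_smul]
    rw [this]
    exact cexp_mul_cexp_neg hconst
  rw [h1, h2, ← mul_assoc, ← map_mul, h3, map_one, one_mul, mul_comm Vgen Ugen]
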